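/- Let W, I, J be independent with W ~ Exp(α+β), I ~ Exp(α), J ~ Exp(β). Define I' = W + (I − J)^+, J' = W + (I − J)^−, W' = min(I, J). Then the triple (I', J', W') has the same joint distribution as (I, J, W). -/

import Mathlib

open MeasureTheory ProbabilityTheory Real Set
open scoped ENNReal

section Helpers

lemma myWithDensity_prod {X Y : Type*} [MeasurableSpace X] [MeasurableSpace Y]
    (μ : Measure X) (ν : Measure Y) {f : X → ℝ≥0∞} {g : Y → ℝ≥0∞}
    (hf : Measurable f) (hg : Measurable g) [SFinite μ] [SFinite ν]
    (h1 : SigmaFinite (μ.withDensity f)) (h2 : SigmaFinite (ν.withDensity g)) :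
    (μ.withDensity f).prod (ν.withDensity g)
      = (μ.prod ν).withDensity fun p => f p.1 * g p.2 := by
  haveI := h1; haveI := h2
  refine Measure.prod_eq fun s t hs ht => ?_
  rw [withDensity_apply _ (hs.prod ht), ← Measure.prod_restrict,
    lintegral_prod_mul hf.aemeasurable hg.aemeasurable,
    withDensity_apply _ hs, withDensity_apply _ ht]

lemma myMap_withDensity {X Y : Type*} [MeasurableSpace X] [MeasurableSpace Y]
    (e : X ≃ᵐ Y) (μ : Measure X) {f : Y → ℝ≥0∞} (hf : Measurable f) :
    (μ.withDensity fun a => f (e a)).map e = (μ.map e).withDensity f := by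
  ext s hs
  rw [Measure.map_apply e.measurable hs, withDensity_apply _ (e.measurable hs),
    withDensity_apply _ hs, setLIntegral_map hs hf e.measurable]

lemma m1 : Measurable fun p : ℝ × ℝ × ℝ => (p.2.2 + p.1 - p.2.1, p.2.2, p.2.1) :=
  ((measurable_snd.snd.add measurable_fst).sub measurable_snd.fst).prodMk
    (measurable_snd.snd.prodMk measurable_snd.fst)

lemma m1' : Measurable fun p : ℝ × ℝ × ℝ => (p.1 - p.2.1 + p.2.2, p.2.2, p.2.1) :=
  ((measurable_fst.sub measurable_snd.fst).add measurable_snd.snd).prodMk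
    (measurable_snd.snd.prodMk measurable_snd.fst)

lemma m2 : Measurable fun p : ℝ × ℝ × ℝ => (p.2.2, p.2.2 + p.2.1 - p.1, p.1) :=
  measurable_snd.snd.prodMk
    (((measurable_snd.snd.add measurable_snd.fst).sub measurable_fst).prodMk measurable_fst)

lemma m2' : Measurable fun p : ℝ × ℝ × ℝ => (p.2.2, p.2.1 - p.1 + p.2.2, p.1) :=
  measurable_snd.snd.prodMk
    (((measurable_snd.fst.sub measurable_fst).add measurable_snd.snd).prodMk measurable_fst)

noncomputable def e1 : (ℝ × ℝ × ℝ) ≃ᵐ (ℝ × ℝ × ℝ) where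
  toFun p := (p.2.2 + p.1 - p.2.1, p.2.2, p.2.1)
  invFun p := (p.1 - p.2.1 + p.2.2, p.2.2, p.2.1)
  left_inv p := by obtain ⟨x, y, z⟩ := p; exact Prod.ext (by ring) rfl
  right_inv p := by obtain ⟨x, y, z⟩ := p; exact Prod.ext (by ring) rfl
  measurable_toFun := m1
  measurable_invFun := m1'

noncomputable def e2 : (ℝ × ℝ × ℝ) ≃ᵐ (ℝ × ℝ × ℝ) where
  toFun p := (p.2.2, p.2.2 + p.2.1 - p.1, p.1)
  invFun p := (p.2.2, p.2.1 - p.1 + p.2.2, p.1)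
  left_inv p := by obtain ⟨x, y, z⟩ := p; exact Prod.ext rfl (Prod.ext (by ring) rfl)
  right_inv p := by obtain ⟨x, y, z⟩ := p; exact Prod.ext rfl (Prod.ext (by ring) rfl)
  measurable_toFun := m2
  measurable_invFun := m2'

lemma hS_mp : MeasurePreserving
    (fun q : (ℝ × ℝ) × ℝ => (Prod.swap q.1, q.2 + (q.1.2 - q.1.1)))
    (((volume : Measure ℝ).prod volume).prod volume)
    (((volume : Measure ℝ).prod volume).prod volume) :=
  MeasurePreserving.skew_product (g := fun (a : ℝ × ℝ) (c : ℝ) => c + (a.2 - a.1))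
    Measure.measurePreserving_swap
    (measurable_snd.add (measurable_fst.snd.sub measurable_fst.fst))
    (Filter.Eventually.of_forall fun _ => (measurePreserving_add_right volume _).map_eq)

lemma mp_e1 : MeasurePreserving ⇑e1 (volume : Measure (ℝ × ℝ × ℝ)) volume := by
  have h1 := (Measure.measurePreserving_swap (μ := (volume : Measure ℝ).prod volume)
      (ν := (volume : Measure ℝ))).comp
    (hS_mp.comp (Measure.measurePreserving_swap (μ := (volume : Measure ℝ))
      (ν := (volume : Measure ℝ).prod volume)))
  have hfun : (Prod.swap ∘ (fun q : (ℝ × ℝ) × ℝ => (Prod.swap q.1, q.2 + (q.1.2 - q.1.1)))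
      ∘ (Prod.swap : ℝ × (ℝ × ℝ) → (ℝ × ℝ) × ℝ)) = ⇑e1 := by
    funext p; obtain ⟨x, y, z⟩ := p
    simp only [Function.comp_apply, Prod.swap_prod_mk, e1, MeasurableEquiv.coe_mk,
      Equiv.coe_fn_mk]
    exact Prod.ext (by ring) rfl
  rw [Measure.volume_eq_prod, Measure.volume_eq_prod (α := ℝ) (β := ℝ)]
  exact hfun ▸ h1

lemma mp_e2 : MeasurePreserving ⇑e2 (volume : Measure (ℝ × ℝ × ℝ)) volume := by
  have hps : MeasurePreserving (Prod.map (id : ℝ → ℝ) (Prod.swap : ℝ × ℝ → ℝ × ℝ))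
      ((volume : Measure ℝ).prod ((volume : Measure ℝ).prod volume))
      ((volume : Measure ℝ).prod ((volume : Measure ℝ).prod volume)) :=
    (MeasurePreserving.id volume).prod Measure.measurePreserving_swap
  have hassoc := measurePreserving_prodAssoc (volume : Measure ℝ) (volume : Measure ℝ)
    (volume : Measure ℝ)
  have h1 := (hps.comp hassoc).comp
    (hS_mp.comp ((MeasurePreserving.symm MeasurableEquiv.prodAssoc hassoc).comp hps))
  have hfun : ((Prod.map (id : ℝ → ℝ) (Prod.swap : ℝ × ℝ → ℝ × ℝ))
      ∘ ⇑(MeasurableEquiv.prodAssoc : (ℝ × ℝ) × ℝ ≃ᵐ ℝ × ℝ × ℝ)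
      ∘ (fun q : (ℝ × ℝ) × ℝ => (Prod.swap q.1, q.2 + (q.1.2 - q.1.1)))
      ∘ ⇑(MeasurableEquiv.prodAssoc : (ℝ × ℝ) × ℝ ≃ᵐ ℝ × ℝ × ℝ).symm
      ∘ (Prod.map (id : ℝ → ℝ) (Prod.swap : ℝ × ℝ → ℝ × ℝ))) = ⇑e2 := by
    funext p; obtain ⟨x, y, z⟩ := p
    simp only [Function.comp_apply, Prod.map_apply, id_eq, Prod.swap_prod_mk,
      MeasurableEquiv.prodAssoc, MeasurableEquiv.coe_mk, Equiv.prodAssoc_apply,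
      MeasurableEquiv.symm_mk, Equiv.prodAssoc_symm_apply, e2, Equiv.coe_fn_mk]
    exact Prod.ext rfl (Prod.ext (by ring) rfl)
  rw [Measure.volume_eq_prod, Measure.volume_eq_prod (α := ℝ) (β := ℝ)]
  exact hfun ▸ h1

lemma dens1 {α β : ℝ} (hα : 0 < α) (hβ : 0 < β) {p : ℝ × ℝ × ℝ} (hp : p.2.1 < p.1) :
    exponentialPDF α (p.1 - p.2.1 + p.2.2)
        * (exponentialPDF β p.2.2 * exponentialPDF (α + β) p.2.1)
      = exponentialPDF α p.1 * (exponentialPDF β p.2.1 * exponentialPDF (α + β) p.2.2) := by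
  obtain ⟨x, y, z⟩ := p
  simp only at hp ⊢
  rcases lt_or_ge y 0 with hy | hy
  · rw [exponentialPDF_of_neg (r := α + β) hy, exponentialPDF_of_neg (r := β) hy]
    simp
  rcases lt_or_ge z 0 with hz | hz
  · rw [exponentialPDF_of_neg (r := β) hz, exponentialPDF_of_neg (r := α + β) hz]
    simp
  have hx : (0:ℝ) ≤ x := le_of_lt (lt_of_le_of_lt hy hp)
  have hxyz : (0:ℝ) ≤ x - y + z := by linarith
  rw [exponentialPDF_of_nonneg hxyz, exponentialPDF_of_nonneg hz,
    exponentialPDF_of_nonneg hy, exponentialPDF_of_nonneg hx,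
    exponentialPDF_of_nonneg hy, exponentialPDF_of_nonneg hz]
  rw [← ENNReal.ofReal_mul (by positivity), ← ENNReal.ofReal_mul (by positivity),
    ← ENNReal.ofReal_mul (by positivity), ← ENNReal.ofReal_mul (by positivity)]
  congr 1
  rw [show -(α * (x - y + z)) = -(α * x) + (α * y - α * z) by ring, exp_add]
  rw [show -(β * y) = -(β * z) + (β * z - β * y) by ring, exp_add (-(β * z))]
  rw [show -((α + β) * z) = -((α + β) * y) + ((α + β) * y - (α + β) * z) by ring,
    exp_add (-((α + β) * y))]
  rw [show α * y - α * z = (β * z - β * y) + ((α + β) * y - (α + β) * z) by ring, exp_add]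
  ring

lemma dens2 {α β : ℝ} (hα : 0 < α) (hβ : 0 < β) {p : ℝ × ℝ × ℝ} (hp : p.1 < p.2.1) :
    exponentialPDF α p.2.2
        * (exponentialPDF β (p.2.1 - p.1 + p.2.2) * exponentialPDF (α + β) p.1)
      = exponentialPDF α p.1 * (exponentialPDF β p.2.1 * exponentialPDF (α + β) p.2.2) := by
  obtain ⟨x, y, z⟩ := p
  simp only at hp ⊢
  rcases lt_or_ge x 0 with hx | hx
  · rw [exponentialPDF_of_neg (r := α + β) hx, exponentialPDF_of_neg (r := α) hx]
    simp
  rcases lt_or_ge z 0 with hz | hz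
  · rw [exponentialPDF_of_neg (r := α) hz, exponentialPDF_of_neg (r := α + β) hz]
    simp
  have hy : (0:ℝ) ≤ y := le_of_lt (lt_of_le_of_lt hx hp)
  have hyxz : (0:ℝ) ≤ y - x + z := by linarith
  rw [exponentialPDF_of_nonneg hz, exponentialPDF_of_nonneg hyxz,
    exponentialPDF_of_nonneg hx, exponentialPDF_of_nonneg hx,
    exponentialPDF_of_nonneg hy, exponentialPDF_of_nonneg hz]
  rw [← ENNReal.ofReal_mul (by positivity), ← ENNReal.ofReal_mul (by positivity),
    ← ENNReal.ofReal_mul (by positivity), ← ENNReal.ofReal_mul (by positivity)]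
  congr 1
  rw [show -(α * z) = -(α * x) + (α * x - α * z) by ring, exp_add]
  rw [show -(β * (y - x + z)) = -(β * y) + (β * x - β * z) by ring, exp_add (-(β * y))]
  rw [show -((α + β) * z) = -((α + β) * x) + ((α + β) * x - (α + β) * z) by ring,
    exp_add (-((α + β) * x))]
  rw [show (α + β) * x - (α + β) * z = (α * x - α * z) + (β * x - β * z) by ring, exp_add]
  ring

end Helpers

lemma key_lemma {α β : ℝ} (hα : 0 < α) (hβ : 0 < β) :
    ((expMeasure α).prod ((expMeasure β).prod (expMeasure (α + β)))).map
        (fun p : ℝ × ℝ × ℝ =>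
          (p.2.2 + max (p.1 - p.2.1) 0, p.2.2 + max (p.2.1 - p.1) 0, min p.1 p.2.1))
      = (expMeasure α).prod ((expMeasure β).prod (expMeasure (α + β))) := by
  have hαβ : 0 < α + β := by linarith
  haveI iα := isProbabilityMeasure_expMeasure hα
  haveI iβ := isProbabilityMeasure_expMeasure hβ
  haveI iαβ := isProbabilityMeasure_expMeasure hαβ
  set F : ℝ × ℝ × ℝ → ℝ × ℝ × ℝ := fun p =>
    (p.2.2 + max (p.1 - p.2.1) 0, p.2.2 + max (p.2.1 - p.1) 0, min p.1 p.2.1) with hF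
  have hFm : Measurable F :=
    (measurable_snd.snd.add ((measurable_fst.sub measurable_snd.fst).max measurable_const)).prodMk
      ((measurable_snd.snd.add
        ((measurable_snd.fst.sub measurable_fst).max measurable_const)).prodMk
        (measurable_fst.min measurable_snd.fst))
  set P : ℝ × ℝ × ℝ → ℝ≥0∞ := fun p =>
    exponentialPDF α p.1 * (exponentialPDF β p.2.1 * exponentialPDF (α + β) p.2.2) with hPdef
  have hmeasPDF : ∀ r : ℝ, Measurable (exponentialPDF r) := fun r =>
    (measurable_exponentialPDFReal r).ennreal_ofReal
  have hPm : Measurable P :=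
    ((hmeasPDF α).comp measurable_fst).mul
      ((((hmeasPDF β).comp measurable_fst).mul
        ((hmeasPDF (α + β)).comp measurable_snd)).comp measurable_snd)
  have hexp : ∀ r : ℝ, expMeasure r = (volume : Measure ℝ).withDensity (exponentialPDF r) :=
    fun r => rfl
  have inner : (expMeasure β).prod (expMeasure (α + β))
      = ((volume : Measure ℝ).prod volume).withDensity
          (fun p => exponentialPDF β p.1 * exponentialPDF (α + β) p.2) := by
    rw [hexp β, hexp (α + β)]
    exact myWithDensity_prod _ _ (hmeasPDF β) (hmeasPDF (α + β))
      (hexp β ▸ inferInstanceAs (SigmaFinite (expMeasure β)))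
      (hexp (α + β) ▸ inferInstanceAs (SigmaFinite (expMeasure (α + β))))
  have hP3 : (expMeasure α).prod ((expMeasure β).prod (expMeasure (α + β)))
      = (volume : Measure (ℝ × ℝ × ℝ)).withDensity P := by
    have h2 : SigmaFinite (((volume : Measure ℝ).prod volume).withDensity
        (fun p => exponentialPDF β p.1 * exponentialPDF (α + β) p.2)) :=
      inner ▸ inferInstanceAs (SigmaFinite ((expMeasure β).prod (expMeasure (α + β))))
    have houter : ((volume : Measure ℝ).withDensity (exponentialPDF α)).prod
        (((volume : Measure ℝ).prod volume).withDensity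
          (fun p => exponentialPDF β p.1 * exponentialPDF (α + β) p.2))
        = ((volume : Measure ℝ).prod ((volume : Measure ℝ).prod volume)).withDensity P :=
      myWithDensity_prod ((volume : Measure ℝ)) ((volume : Measure ℝ).prod volume)
        (g := fun p : ℝ × ℝ => exponentialPDF β p.1 * exponentialPDF (α + β) p.2)
        (hmeasPDF α)
        (((hmeasPDF β).comp measurable_fst).mul ((hmeasPDF (α + β)).comp measurable_snd))
        (hexp α ▸ inferInstanceAs (SigmaFinite (expMeasure α))) h2
    have hvol : ((volume : Measure ℝ).prod ((volume : Measure ℝ).prod volume))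
        = (volume : Measure (ℝ × ℝ × ℝ)) := by
      rw [Measure.volume_eq_prod, Measure.volume_eq_prod (α := ℝ) (β := ℝ)]
    rw [inner, hexp α, houter, hvol]
  set A : Set (ℝ × ℝ × ℝ) := {p | p.2.1 < p.1} with hA
  set B : Set (ℝ × ℝ × ℝ) := {p | p.1 < p.2.1} with hB
  have hAm : MeasurableSet A := measurableSet_lt measurable_snd.fst measurable_fst
  have hBm : MeasurableSet B := measurableSet_lt measurable_fst measurable_snd.fst
  have hDm : MeasurableSet {p : ℝ × ℝ × ℝ | p.1 = p.2.1} :=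
    measurableSet_eq_fun measurable_fst measurable_snd.fst
  have hDvol : (volume : Measure (ℝ × ℝ × ℝ)) {p | p.1 = p.2.1} = 0 := by
    rw [Measure.volume_eq_prod, Measure.prod_apply hDm]
    have hz : ∀ x : ℝ, (volume : Measure (ℝ × ℝ)) {q : ℝ × ℝ | x = q.1} = 0 := by
      intro x
      have hset : {q : ℝ × ℝ | x = q.1} = ({x} : Set ℝ) ×ˢ (univ : Set ℝ) := by
        ext q
        simp only [Set.mem_setOf_eq, Set.mem_prod, Set.mem_singleton_iff, Set.mem_univ, and_true]
        exact eq_comm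
      rw [hset, Measure.volume_eq_prod, Measure.prod_prod]
      simp
    simp only [Set.preimage_setOf_eq]
    simp [hz]
  have hsplit : ∀ m : Measure (ℝ × ℝ × ℝ), m {p | p.1 = p.2.1} = 0 →
      m.restrict A + m.restrict B = m := by
    intro m hm
    have hdisj : Disjoint A B := by
      rw [Set.disjoint_left]
      intro p hpA hpB
      exact lt_asymm (show p.2.1 < p.1 from hpA) (show p.1 < p.2.1 from hpB)
    rw [← Measure.restrict_union hdisj hBm]
    have hcompl : (A ∪ B)ᶜ = {p : ℝ × ℝ × ℝ | p.1 = p.2.1} := by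
      ext p
      simp only [hA, hB, Set.mem_compl_iff, Set.mem_union, Set.mem_setOf_eq, not_or, not_lt]
      constructor
      · rintro ⟨h1, h2⟩; linarith
      · intro h; constructor <;> linarith
    have hu := ae_eq_univ.mpr (show m ((A ∪ B)ᶜ) = 0 by rw [hcompl]; exact hm)
    rw [Measure.restrict_congr_set hu, Measure.restrict_univ]
  have habs : ((volume : Measure (ℝ × ℝ × ℝ)).withDensity P) {p | p.1 = p.2.1} = 0 :=
    withDensity_absolutelyContinuous _ _ hDvol
  have hApre : ⇑e1 ⁻¹' A = A := by
    ext p; obtain ⟨x, y, z⟩ := p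
    simp only [hA, Set.mem_preimage, Set.mem_setOf_eq, e1, MeasurableEquiv.coe_mk,
      Equiv.coe_fn_mk]
    constructor <;> intro h <;> linarith
  have hBpre : ⇑e2 ⁻¹' B = B := by
    ext p; obtain ⟨x, y, z⟩ := p
    simp only [hB, Set.mem_preimage, Set.mem_setOf_eq, e2, MeasurableEquiv.coe_mk,
      Equiv.coe_fn_mk]
    constructor <;> intro h <;> linarith
  have key1 : (((volume : Measure (ℝ × ℝ × ℝ)).withDensity P).restrict A).map F
      = ((volume : Measure (ℝ × ℝ × ℝ)).restrict A).withDensity P := by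
    have hFe : F =ᵐ[((volume : Measure (ℝ × ℝ × ℝ)).withDensity P).restrict A] ⇑e1 := by
      refine (ae_restrict_mem hAm).mono fun p hp => ?_
      have hp' : p.2.1 < p.1 := hp
      simp only [hF, e1, MeasurableEquiv.coe_mk, Equiv.coe_fn_mk]
      rw [max_eq_left (sub_nonneg.2 (le_of_lt hp')), max_eq_right (sub_nonpos.2 (le_of_lt hp')),
        min_eq_right (le_of_lt hp')]
      exact Prod.ext (by ring) (Prod.ext (by ring) rfl)
    calc (((volume : Measure (ℝ × ℝ × ℝ)).withDensity P).restrict A).map F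
        = (((volume : Measure (ℝ × ℝ × ℝ)).withDensity P).restrict A).map ⇑e1 :=
          Measure.map_congr hFe
      _ = (((volume : Measure (ℝ × ℝ × ℝ)).restrict A).withDensity P).map ⇑e1 := by
          rw [restrict_withDensity hAm]
      _ = (((volume : Measure (ℝ × ℝ × ℝ)).restrict A).map ⇑e1).withDensity
            (fun q => P (e1.symm q)) := by
          rw [← myMap_withDensity e1 ((volume : Measure (ℝ × ℝ × ℝ)).restrict A)
            (f := fun q => P (e1.symm q)) (hPm.comp e1.symm.measurable)]
          congr 1
          refine withDensity_congr_ae (Filter.Eventually.of_forall fun a => ?_)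
          simp
      _ = ((((volume : Measure (ℝ × ℝ × ℝ)).map ⇑e1).restrict A)).withDensity
            (fun q => P (e1.symm q)) := by
          conv_lhs => rw [← hApre]
          rw [← Measure.restrict_map e1.measurable hAm]
      _ = ((volume : Measure (ℝ × ℝ × ℝ)).restrict A).withDensity (fun q => P (e1.symm q)) := by
          rw [mp_e1.map_eq]
      _ = ((volume : Measure (ℝ × ℝ × ℝ)).restrict A).withDensity P := by
          refine withDensity_congr_ae ((ae_restrict_mem hAm).mono fun p hp => ?_)
          have hp' : p.2.1 < p.1 := hp
          simp only [hPdef, e1, MeasurableEquiv.symm_mk, MeasurableEquiv.coe_mk,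
            Equiv.coe_fn_symm_mk]
          exact dens1 hα hβ hp'
  have key2 : (((volume : Measure (ℝ × ℝ × ℝ)).withDensity P).restrict B).map F
      = ((volume : Measure (ℝ × ℝ × ℝ)).restrict B).withDensity P := by
    have hFe : F =ᵐ[((volume : Measure (ℝ × ℝ × ℝ)).withDensity P).restrict B] ⇑e2 := by
      refine (ae_restrict_mem hBm).mono fun p hp => ?_
      have hp' : p.1 < p.2.1 := hp
      simp only [hF, e2, MeasurableEquiv.coe_mk, Equiv.coe_fn_mk]
      rw [max_eq_right (sub_nonpos.2 (le_of_lt hp')), max_eq_left (sub_nonneg.2 (le_of_lt hp')),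
        min_eq_left (le_of_lt hp')]
      exact Prod.ext (by ring) (Prod.ext (by ring) rfl)
    calc (((volume : Measure (ℝ × ℝ × ℝ)).withDensity P).restrict B).map F
        = (((volume : Measure (ℝ × ℝ × ℝ)).withDensity P).restrict B).map ⇑e2 :=
          Measure.map_congr hFe
      _ = (((volume : Measure (ℝ × ℝ × ℝ)).restrict B).withDensity P).map ⇑e2 := by
          rw [restrict_withDensity hBm]
      _ = (((volume : Measure (ℝ × ℝ × ℝ)).restrict B).map ⇑e2).withDensity
            (fun q => P (e2.symm q)) := by
          rw [← myMap_withDensity e2 ((volume : Measure (ℝ × ℝ × ℝ)).restrict B)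
            (f := fun q => P (e2.symm q)) (hPm.comp e2.symm.measurable)]
          congr 1
          refine withDensity_congr_ae (Filter.Eventually.of_forall fun a => ?_)
          simp
      _ = ((((volume : Measure (ℝ × ℝ × ℝ)).map ⇑e2).restrict B)).withDensity
            (fun q => P (e2.symm q)) := by
          conv_lhs => rw [← hBpre]
          rw [← Measure.restrict_map e2.measurable hBm]
      _ = ((volume : Measure (ℝ × ℝ × ℝ)).restrict B).withDensity (fun q => P (e2.symm q)) := by
          rw [mp_e2.map_eq]
      _ = ((volume : Measure (ℝ × ℝ × ℝ)).restrict B).withDensity P := by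
          refine withDensity_congr_ae ((ae_restrict_mem hBm).mono fun p hp => ?_)
          have hp' : p.1 < p.2.1 := hp
          simp only [hPdef, e2, MeasurableEquiv.symm_mk, MeasurableEquiv.coe_mk,
            Equiv.coe_fn_symm_mk]
          exact dens2 hα hβ hp'
  rw [hP3]
  calc ((volume : Measure (ℝ × ℝ × ℝ)).withDensity P).map F
      = (((volume : Measure (ℝ × ℝ × ℝ)).withDensity P).restrict A).map F
        + (((volume : Measure (ℝ × ℝ × ℝ)).withDensity P).restrict B).map F := by
        conv_lhs => rw [← hsplit _ habs]
        exact Measure.map_add _ _ hFm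
    _ = ((volume : Measure (ℝ × ℝ × ℝ)).restrict A).withDensity P
        + ((volume : Measure (ℝ × ℝ × ℝ)).restrict B).withDensity P := by rw [key1, key2]
    _ = ((volume : Measure (ℝ × ℝ × ℝ)).withDensity P).restrict A
        + ((volume : Measure (ℝ × ℝ × ℝ)).withDensity P).restrict B := by
        rw [restrict_withDensity hAm, restrict_withDensity hBm]
    _ = (volume : Measure (ℝ × ℝ × ℝ)).withDensity P := hsplit _ habs

/-- Let `W ~ Exp(α+β)`, `I ~ Exp(α)`, `J ~ Exp(β)` be independent. Then the triple
`(I', J', W') = (W + (I-J)⁺, W + (I-J)⁻, min(I,J))` has the same distribution as `(I, J, W)`. -/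
theorem exp_triple_involution_dist {Ω : Type*} [MeasurableSpace Ω] (μ : Measure Ω)
    [IsProbabilityMeasure μ] {W I J : Ω → ℝ}
    (hW : Measurable W) (hI : Measurable I) (hJ : Measurable J)
    {α β : ℝ} (hα : 0 < α) (hβ : 0 < β)
    (hindep : iIndepFun ![W, I, J] μ)
    (hWd : μ.map W = expMeasure (α + β))
    (hId : μ.map I = expMeasure α) (hJd : μ.map J = expMeasure β) :
    μ.map (fun ω => (W ω + max (I ω - J ω) 0, W ω + max (J ω - I ω) 0, min (I ω) (J ω)))
      = μ.map (fun ω => (I ω, J ω, W ω)) := by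
  have hmeas : ∀ i, Measurable (![W, I, J] i) := by
    intro i; fin_cases i <;> assumption
  have hJW : IndepFun (fun ω => (J ω, W ω)) I μ :=
    hindep.indepFun_prodMk hmeas 2 0 1 (by decide) (by decide)
  have hJWpair : IndepFun J W μ := hindep.indepFun (show (2 : Fin 3) ≠ 0 by decide)
  have hIJW : μ.map (fun ω => (I ω, J ω, W ω))
      = (expMeasure α).prod ((expMeasure β).prod (expMeasure (α + β))) := by
    have h1 : IndepFun I (fun ω => (J ω, W ω)) μ := hJW.symm
    rw [show (fun ω => (I ω, J ω, W ω)) = (fun ω => (I ω, (fun ω' => (J ω', W ω')) ω)) from rfl,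
      (indepFun_iff_map_prod_eq_prod_map_map hI.aemeasurable
        ((hJ.prodMk hW).aemeasurable)).mp h1,
      (indepFun_iff_map_prod_eq_prod_map_map hJ.aemeasurable hW.aemeasurable).mp hJWpair,
      hId, hJd, hWd]
  set F : ℝ × ℝ × ℝ → ℝ × ℝ × ℝ := fun p =>
    (p.2.2 + max (p.1 - p.2.1) 0, p.2.2 + max (p.2.1 - p.1) 0, min p.1 p.2.1) with hF
  have hFm : Measurable F :=
    (measurable_snd.snd.add ((measurable_fst.sub measurable_snd.fst).max measurable_const)).prodMk
      ((measurable_snd.snd.add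
        ((measurable_snd.fst.sub measurable_fst).max measurable_const)).prodMk
        (measurable_fst.min measurable_snd.fst))
  calc μ.map (fun ω => (W ω + max (I ω - J ω) 0, W ω + max (J ω - I ω) 0, min (I ω) (J ω)))
      = (μ.map (fun ω => (I ω, J ω, W ω))).map F := by
        rw [Measure.map_map hFm (hI.prodMk (hJ.prodMk hW))]
        rfl
    _ = ((expMeasure α).prod ((expMeasure β).prod (expMeasure (α + β)))).map F := by rw [hIJW]
    _ = (expMeasure α).prod ((expMeasure β).prod (expMeasure (α + β))) := key_lemma hα hβ
    _ = μ.map (fun ω => (I ω, J ω, W ω)) := hIJW.symm
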